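/- arXiv:1610.01368 — 4 statements merged into one kernel-verified Lean document; each statement's English description precedes it below -/
import Mathlib

section
/- Let F be a field of characteristic 0 and α, β ∈ F×. Suppose E is a field extension of F containing elements a, b with a² = α and b² = -β. Then the map sending i ↦ [[a,0],[0,-a]] and j ↦ [[0,b],[-b,0]] extends to an E-algebra isomorphism ℍ_F^{α,β} ⊗_F E → M₂(E). -/
open Quaternion
open scoped TensorProduct

/-- if `E/F` is a field extension containing `a, b` with `a² = α`,
`b² = -β`, then `i ↦ [[a,0],[0,-a]]`, `j ↦ [[0,b],[-b,0]]` extends to an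
`E`-algebra isomorphism `ℍ_F^{α,β} ⊗_F E ≅ M₂(E)`. -/
theorem stmt8 (F E : Type*) [Field F] [CharZero F] [Field E] [Algebra F E]
    (α β : F) (hα : α ≠ 0) (hβ : β ≠ 0) (a b : E)
    (ha : a ^ 2 = algebraMap F E α) (hb : b ^ 2 = -algebraMap F E β) :
    ∃ φ : (E ⊗[F] ℍ[F, α, β]) ≃ₐ[E] Matrix (Fin 2) (Fin 2) E,
      φ ((1 : E) ⊗ₜ (⟨0, 1, 0, 0⟩ : ℍ[F, α, β])) = !![a, 0; 0, -a] ∧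
      φ ((1 : E) ⊗ₜ (⟨0, 0, 1, 0⟩ : ℍ[F, α, β])) = !![0, b; -b, 0] := by
  have hE : Function.Injective (algebraMap F E) := RingHom.injective _
  have haE : algebraMap F E α ≠ 0 := fun h => hα (hE (by simpa using h))
  have hbE : algebraMap F E β ≠ 0 := fun h => hβ (hE (by simpa using h))
  have ha0 : a ≠ 0 := fun h => haE (by rw [← ha, h]; ring)
  have hb0 : b ≠ 0 := by
    intro h
    apply hbE
    have : -algebraMap F E β = 0 := by rw [← hb, h]; ring
    simpa using this
  have hsmul : ∀ (c : F) (M : Matrix (Fin 2) (Fin 2) E),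
      c • M = algebraMap F E c • M := fun c M => by
    ext i j
    simp [Matrix.smul_apply, Algebra.smul_def]
  let Bas : QuaternionAlgebra.Basis (Matrix (Fin 2) (Fin 2) E) α 0 β :=
    { i := !![a, 0; 0, -a]
      j := !![0, b; -b, 0]
      k := !![0, a * b; a * b, 0]
      i_mul_i := by
        rw [hsmul]
        ext i j
        fin_cases i <;> fin_cases j <;>
          simp [Matrix.mul_apply, Fin.sum_univ_succ, Matrix.one_apply, ← ha] <;> ring
      j_mul_j := by
        rw [hsmul]
        have hb' : algebraMap F E β = -(b ^ 2) := by rw [hb]; ring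
        ext i j
        fin_cases i <;> fin_cases j <;>
          simp [Matrix.mul_apply, Fin.sum_univ_succ, Matrix.one_apply, hb'] <;> ring
      i_mul_j := by
        ext i j
        fin_cases i <;> fin_cases j <;>
          simp [Matrix.mul_apply, Fin.sum_univ_succ] <;> ring
      j_mul_i := by
        ext i j
        fin_cases i <;> fin_cases j <;>
          simp [Matrix.mul_apply, Fin.sum_univ_succ] <;> ring }
  let ψ : (E ⊗[F] ℍ[F, α, β]) →ₐ[E] Matrix (Fin 2) (Fin 2) E :=
    Algebra.TensorProduct.lift (Algebra.ofId E _) Bas.liftHom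
      (fun x y => by simpa [Algebra.ofId_apply] using Algebra.commute_algebraMap_left x (Bas.liftHom y))
  have hψ : ∀ (x : E) (q : ℍ[F, α, β]),
      ψ (x ⊗ₜ q) = x • (algebraMap F E q.re • 1 + q.imI • Bas.i + q.imJ • Bas.j
        + q.imK • Bas.k) := by
    intro x q
    rw [Algebra.TensorProduct.lift_tmul]
    simp only [QuaternionAlgebra.Basis.liftHom_apply, QuaternionAlgebra.Basis.lift]
    rw [hsmul q.imI, hsmul q.imJ, hsmul q.imK, Algebra.ofId_apply, Algebra.smul_def]
    congr 1
    simp [Algebra.algebraMap_eq_smul_one]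
  have hi : ψ ((1 : E) ⊗ₜ (⟨0, 1, 0, 0⟩ : ℍ[F, α, β])) = Bas.i := by
    rw [hψ]; simp
  have hj : ψ ((1 : E) ⊗ₜ (⟨0, 0, 1, 0⟩ : ℍ[F, α, β])) = Bas.j := by
    rw [hψ]; simp
  have : CharZero E := charZero_of_injective_algebraMap hE
  have two0 : (2 : E) ≠ 0 := two_ne_zero
  have hsurj : Function.Surjective ψ := by
    intro M
    refine ⟨((M 0 0 + M 1 1) / 2) ⊗ₜ (1 : ℍ[F, α, β])
      + ((M 0 0 - M 1 1) / (2 * a)) ⊗ₜ (⟨0, 1, 0, 0⟩ : ℍ[F, α, β])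
      + ((M 0 1 - M 1 0) / (2 * b)) ⊗ₜ (⟨0, 0, 1, 0⟩ : ℍ[F, α, β])
      + ((M 0 1 + M 1 0) / (2 * (a * b))) ⊗ₜ (⟨0, 0, 0, 1⟩ : ℍ[F, α, β]), ?_⟩
    rw [map_add, map_add, map_add, hψ, hψ, hψ, hψ]
    ext i j
    fin_cases i <;> fin_cases j <;>
      · simp only [QuaternionAlgebra.re_one, QuaternionAlgebra.imI_one,
          QuaternionAlgebra.imJ_one, QuaternionAlgebra.imK_one, map_one, map_zero, Bas,
          one_smul, zero_smul, smul_zero, add_zero, zero_add, Matrix.smul_apply,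
          Matrix.add_apply, Matrix.one_apply, smul_eq_mul, Matrix.cons_val', Matrix.cons_val_zero,
          Matrix.cons_val_one, Matrix.head_cons, Matrix.head_fin_const, Matrix.empty_val',
          Matrix.cons_val_fin_one, Matrix.cons_val_one, Fin.isValue]
        simp
        field_simp
        ring
  have hfr : Module.finrank E (E ⊗[F] ℍ[F, α, β])
      = Module.finrank E (Matrix (Fin 2) (Fin 2) E) := by
    rw [Module.finrank_baseChange, QuaternionAlgebra.finrank_eq_four, Module.finrank_matrix]
    simp
  have hinj : Function.Injective ψ :=
    (LinearMap.injective_iff_surjective_of_finrank_eq_finrank (f := ψ.toLinearMap) hfr).2 hsurj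
  refine ⟨AlgEquiv.ofBijective ψ ⟨hinj, hsurj⟩, ?_, ?_⟩
  · exact hi
  · exact hj
end

section
/- Let α, β < 0 be real numbers and 𝔻 = ℍ_ℝ^{α,β}. Every element d ∈ 𝔻 with τ_r(d) = d can be written as d = u² for some u ∈ 𝔻 with τ_r(u) = u. Equivalently, for any a, b, c ∈ ℝ there exist x, y, w ∈ ℝ with x² + αy² - αβw² = a, 2xy = b, 2xw = c. -/
open Quaternion Matrix

/-- The reversion `τ_r` on a quaternion algebra `ℍ_F^{α,β}`:
`q₀ + q₁ i + q₂ j + q₃ k ↦ q₀ + q₁ i - q₂ j + q₃ k`. -/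
def tauRQ {F : Type*} [CommRing F] {α β : F} (q : ℍ[F, α, β]) : ℍ[F, α, β] :=
  ⟨q.re, q.imI, -q.imJ, q.imK⟩

lemma key (α β : ℝ) (hα : α < 0) (hβ : β < 0) (a b c : ℝ) :
    ∃ x y w : ℝ,
      x ^ 2 + α * y ^ 2 - α * β * w ^ 2 = a ∧ 2 * x * y = b ∧ 2 * x * w = c := by
  by_cases hbc : b = 0 ∧ c = 0
  · obtain ⟨hb, hc⟩ := hbc
    subst hb; subst hc
    rcases le_or_gt 0 a with ha | ha
    · exact ⟨Real.sqrt a, 0, 0, by rw [Real.sq_sqrt ha]; ring, by ring, by ring⟩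
    · refine ⟨0, Real.sqrt (a / α), 0, ?_, by ring, by ring⟩
      rw [Real.sq_sqrt (by rw [le_div_iff_of_neg hα]; simpa using ha.le)]
      rw [mul_div_cancel₀ a hα.ne]
      ring
  · have hK : α * (b ^ 2 - β * c ^ 2) < 0 := by
      have h1 : 0 < b ^ 2 - β * c ^ 2 := by
        rcases not_and_or.mp hbc with h | h
        · nlinarith [sq_nonneg c, sq_pos_of_ne_zero (show b ≠ 0 from h)]
        · nlinarith [sq_nonneg b, sq_pos_of_ne_zero (show c ≠ 0 from h)]
      nlinarith
    set K := α * (b ^ 2 - β * c ^ 2) with hKdef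
    set s := Real.sqrt (a ^ 2 - K) with hs
    have hs2 : s ^ 2 = a ^ 2 - K := Real.sq_sqrt (by nlinarith)
    have hsa : |a| < s := by
      have : |a| = Real.sqrt (a ^ 2) := (Real.sqrt_sq_eq_abs a).symm
      rw [this, hs]
      exact Real.sqrt_lt_sqrt (sq_nonneg a) (by linarith)
    have ht : 0 < (a + s) / 2 := by
      have := abs_le.mp hsa.le
      have := neg_abs_le a
      linarith [lt_of_abs_lt hsa]
    set t := (a + s) / 2 with htdef
    have hx2 : (Real.sqrt t) ^ 2 = t := Real.sq_sqrt ht.le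
    have hxne : Real.sqrt t ≠ 0 := by positivity
    refine ⟨Real.sqrt t, b / (2 * Real.sqrt t), c / (2 * Real.sqrt t), ?_, ?_, ?_⟩
    · have hteq : t ^ 2 - a * t + K / 4 = 0 := by
        rw [htdef]; nlinarith [hs2]
      field_simp
      nlinarith [hx2, ht, show Real.sqrt t ^ 4 = t ^ 2 by rw [show (4:ℕ) = 2 * 2 from rfl, pow_mul, hx2]]
    · field_simp
    · field_simp

/-- for `α, β < 0`, every `d ∈ ℍ_ℝ^{α,β}` fixed by the reversion is
a square of a reversion-fixed element; equivalently the corresponding real system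
of equations is solvable. -/
theorem stmt12 (α β : ℝ) (hα : α < 0) (hβ : β < 0) :
    (∀ d : ℍ[ℝ, α, β], tauRQ d = d → ∃ u : ℍ[ℝ, α, β], tauRQ u = u ∧ d = u ^ 2) ∧
    (∀ a b c : ℝ, ∃ x y w : ℝ,
      x ^ 2 + α * y ^ 2 - α * β * w ^ 2 = a ∧ 2 * x * y = b ∧ 2 * x * w = c) := by
  refine ⟨?_, key α β hα hβ⟩
  intro d hd
  have hJ : d.imJ = 0 := by
    have := congrArg QuaternionAlgebra.imJ hd
    simp [tauRQ] at this
    linarith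
  obtain ⟨x, y, w, h1, h2, h3⟩ := key α β hα hβ d.re d.imI d.imK
  refine ⟨⟨x, y, 0, w⟩, by simp [tauRQ], ?_⟩
  ext <;> simp [pow_two, QuaternionAlgebra.re_mul, QuaternionAlgebra.imI_mul,
    QuaternionAlgebra.imJ_mul, QuaternionAlgebra.imK_mul, hJ] <;> nlinarith [h1, h2, h3]
end

section
/- Let α, β < 0 and D = diag(d₁,…,dₙ) ∈ Mₙ(ℍ_ℝ^{α,β}) a non-singular τ_r-hermitian diagonal matrix. Then there exists a τ_r-hermitian diagonal matrix P ∈ Mₙ(ℍ_ℝ^{α,β}) with D = P² = ᵗτ_r(P)·P. -/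
open Quaternion Matrix

set_option maxHeartbeats 1600000 in
lemma exists_sqrt (α β : ℝ) (hα : α < 0) (hβ : β < 0) (q : ℍ[ℝ, α, β])
    (hq : q.imJ = 0) : ∃ p : ℍ[ℝ, α, β], p.imJ = 0 ∧ p * p = q := by
  obtain ⟨a, b, c, ha, hb, hc⟩ : ∃ a b c, q.re = a ∧ q.imI = b ∧ q.imK = c :=
    ⟨_, _, _, rfl, rfl, rfl⟩
  obtain ⟨N, hN⟩ : ∃ N, N = -α * b ^ 2 + α * β * c ^ 2 := ⟨_, rfl⟩
  have hNb : 0 ≤ -α * b ^ 2 := mul_nonneg (neg_nonneg.mpr hα.le) (sq_nonneg b)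
  have hNc : 0 ≤ α * β * c ^ 2 := mul_nonneg (mul_pos_of_neg_of_neg hα hβ).le (sq_nonneg c)
  have hN0 : 0 ≤ N := by rw [hN]; linarith
  obtain ⟨r, hrd⟩ : ∃ r, r = Real.sqrt (a ^ 2 + N) := ⟨_, rfl⟩
  have hr2 : r ^ 2 = a ^ 2 + N := by rw [hrd]; exact Real.sq_sqrt (by positivity)
  have hra : |a| ≤ r := by
    rw [hrd]
    calc |a| = Real.sqrt (a ^ 2) := by rw [Real.sqrt_sq_eq_abs]
    _ ≤ _ := Real.sqrt_le_sqrt (by linarith)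
  have h1 : 0 ≤ (r + a) / 2 := by cases abs_le.mp hra; linarith
  have h2 : 0 ≤ (r - a) / 2 := by cases abs_le.mp hra; linarith
  obtain ⟨x, hxd⟩ : ∃ x, x = Real.sqrt ((r + a) / 2) := ⟨_, rfl⟩
  obtain ⟨y, hyd⟩ : ∃ y, y = Real.sqrt ((r - a) / 2) := ⟨_, rfl⟩
  have hx2 : x ^ 2 = (r + a) / 2 := by rw [hxd]; exact Real.sq_sqrt h1
  have hy2 : y ^ 2 = (r - a) / 2 := by rw [hyd]; exact Real.sq_sqrt h2
  obtain ⟨s, hsd⟩ : ∃ s, s = Real.sqrt N := ⟨_, rfl⟩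
  have hs2 : s ^ 2 = N := by rw [hsd]; exact Real.sq_sqrt hN0
  have hs0 : 0 ≤ s := by rw [hsd]; exact Real.sqrt_nonneg _
  have hxy : 2 * (x * y) = s := by
    have hxy1 : x * y = Real.sqrt (((r + a) / 2) * ((r - a) / 2)) := by
      rw [hxd, hyd]; exact (Real.sqrt_mul h1 _).symm
    have he : ((r + a) / 2) * ((r - a) / 2) = N / 4 := by nlinarith [hr2]
    have h4 : Real.sqrt (N / 4) = s / 2 := by
      rw [show N / 4 = (s / 2) ^ 2 by rw [div_pow, hs2]; norm_num,
        Real.sqrt_sq (by positivity)]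
    rw [hxy1, he, h4]; ring
  have hxya : x ^ 2 - y ^ 2 = a := by rw [hx2, hy2]; ring
  rcases eq_or_ne s 0 with hs' | hs'
  · have hNz : N = 0 := by rw [← hs2, hs']; ring
    have hE : -α * b ^ 2 + α * β * c ^ 2 = 0 := by rw [← hN, hNz]
    have hb0 : b = 0 := by
      have hb2 : -α * b ^ 2 = 0 := by linarith
      have hb3 : b ^ 2 = 0 := by
        rcases mul_eq_zero.mp hb2 with h | h
        · linarith
        · exact h
      exact pow_eq_zero_iff (n := 2) (by norm_num) |>.mp hb3
    have hc0 : c = 0 := by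
      have hc2 : α * β * c ^ 2 = 0 := by linarith
      have hc3 : c ^ 2 = 0 := by
        rcases mul_eq_zero.mp hc2 with h | h
        · nlinarith
        · exact h
      exact pow_eq_zero_iff (n := 2) (by norm_num) |>.mp hc3
    have hxy0 : x * y = 0 := by rw [hs'] at hxy; linarith
    have hna : (0:ℝ) < -α := by linarith
    have hsa : Real.sqrt (-α) ^ 2 = -α := Real.sq_sqrt hna.le
    have hsane : Real.sqrt (-α) ≠ 0 := by positivity
    refine ⟨⟨x, y / Real.sqrt (-α), 0, 0⟩, rfl, ?_⟩
    ext
    · show x * x + α * (y / Real.sqrt (-α)) * (y / Real.sqrt (-α)) + β * 0 * 0 + 0 * β * 0 * 0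
        - α * β * 0 * 0 = q.re
      rw [ha]; field_simp; nlinarith [hsa, hxya]
    · show x * (y / Real.sqrt (-α)) + (y / Real.sqrt (-α)) * x + 0 * (y / Real.sqrt (-α)) * (y / Real.sqrt (-α)) - β * 0 * 0
        + β * 0 * 0 = q.imI
      rw [hb, hb0]; field_simp; linear_combination (2 * Real.sqrt (-α)) * hxy0
    · show x * 0 + α * (y / Real.sqrt (-α)) * 0 + 0 * x + 0 * 0 * (y / Real.sqrt (-α))
        - α * 0 * (y / Real.sqrt (-α)) = q.imJ
      rw [hq]; ring
    · show x * 0 + (y / Real.sqrt (-α)) * 0 + 0 * (y / Real.sqrt (-α)) * 0 - 0 * (y / Real.sqrt (-α)) + 0 * x = q.imK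
      rw [hc, hc0]; ring
  · refine ⟨⟨x, y * b / s, 0, y * c / s⟩, rfl, ?_⟩
    ext
    · show x * x + α * (y * b / s) * (y * b / s) + β * 0 * 0 + 0 * β * 0 * (y * c / s)
        - α * β * (y * c / s) * (y * c / s) = q.re
      rw [ha]; field_simp
      nlinarith [hs2, hxya, hN]
    · show x * (y * b / s) + (y * b / s) * x + 0 * (y * b / s) * (y * b / s) - β * 0 * (y * c / s)
        + β * (y * c / s) * 0 = q.imI
      rw [hb]; field_simp; linear_combination s * b * hxy
    · show x * 0 + α * (y * b / s) * (y * c / s) + 0 * x + 0 * 0 * (y * b / s)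
        - α * (y * c / s) * (y * b / s) = q.imJ
      rw [hq]; ring
    · show x * (y * c / s) + (y * b / s) * 0 + 0 * (y * b / s) * (y * c / s) - 0 * (y * b / s) + (y * c / s) * x = q.imK
      rw [hc]; field_simp; linear_combination s * c * hxy

/-- for `α, β < 0`, every non-singular `τ_r`-hermitian diagonal
matrix `D ∈ Mₙ(ℍ_ℝ^{α,β})` has a `τ_r`-hermitian diagonal square root `P`, with
`D = P² = ᵗτ_r(P)·P`. -/
theorem stmt14 (α β : ℝ) (hα : α < 0) (hβ : β < 0) (n : ℕ)
    (d : Fin n → ℍ[ℝ, α, β]) (hd : ∀ l, tauRQ (d l) = d l)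
    (hDu : IsUnit (Matrix.diagonal d)) :
    ∃ p : Fin n → ℍ[ℝ, α, β], (∀ l, tauRQ (p l) = p l) ∧
      Matrix.diagonal d = (Matrix.diagonal p) ^ 2 ∧
      Matrix.diagonal d = ((Matrix.diagonal p).map tauRQ)ᵀ * Matrix.diagonal p := by
  have hdJ : ∀ l, (d l).imJ = 0 := by
    intro l
    have := congrArg QuaternionAlgebra.imJ (hd l)
    simp only [tauRQ] at this
    linarith [this]
  choose p hpJ hpsq using fun l => exists_sqrt α β hα hβ (d l) (hdJ l)
  have hptau : ∀ l, tauRQ (p l) = p l := by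
    intro l
    unfold tauRQ
    ext <;> first | rfl | simp [hpJ l]
  have htz : tauRQ (0 : ℍ[ℝ, α, β]) = 0 := by
    unfold tauRQ; ext <;> first | rfl | simp
  have hdd : d = fun l => p l * p l := funext fun l => (hpsq l).symm
  refine ⟨p, hptau, ?_, ?_⟩
  · rw [sq, diagonal_mul_diagonal, hdd]
  · rw [Matrix.diagonal_map htz, diagonal_transpose, diagonal_mul_diagonal, hdd]
    have he : (fun i => tauRQ (p i) * p i) = fun l => p l * p l :=
      funext fun l => by rw [hptau l]
    rw [he]
end

section
/- Let F be a field of characteristic 0, 𝔻 = ℍ_F^{α,β} with α, β < 0 (F ⊂ ℝ), A = diag(a₁,…,aₙ) ∈ Mₙ(𝔻) non-singular and τ_r-hermitian. If S = diag(s₁,…,sₙ) ∈ Mₙ(𝔻) satisfies S² = -λIₙ and ᵗτ_r(S)·A·S = μA for some λ, μ ∈ F×, with some sₖ ∉ F, then μ = λ or μ = -λ. -/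
open Quaternion Matrix

set_option synthInstance.maxHeartbeats 1000000

/-- The norm form on a quaternion algebra. -/
def nQ {F : Type*} [CommRing F] {α β : F} (q : ℍ[F, α, β]) : F :=
  q.re ^ 2 - α * q.imI ^ 2 - β * q.imJ ^ 2 + α * β * q.imK ^ 2

lemma nQ_mul {F : Type*} [CommRing F] {α β : F} (p q : ℍ[F, α, β]) :
    nQ (p * q) = nQ p * nQ q := by
  simp only [nQ, QuaternionAlgebra.re_mul, QuaternionAlgebra.imI_mul,
    QuaternionAlgebra.imJ_mul, QuaternionAlgebra.imK_mul]
  ring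

lemma nQ_tauRQ {F : Type*} [CommRing F] {α β : F} (q : ℍ[F, α, β]) :
    nQ (tauRQ q) = nQ q := by
  simp only [nQ, tauRQ]
  ring

lemma nQ_smul {F : Type*} [CommRing F] {α β : F} (c : F) (q : ℍ[F, α, β]) :
    nQ (c • q) = c ^ 2 * nQ q := by
  simp only [nQ, QuaternionAlgebra.re_smul, QuaternionAlgebra.imI_smul,
    QuaternionAlgebra.imJ_smul, QuaternionAlgebra.imK_smul, smul_eq_mul]
  ring

lemma nQ_neg {F : Type*} [CommRing F] {α β : F} (q : ℍ[F, α, β]) :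
    nQ (-q) = nQ q := by
  simp only [nQ, QuaternionAlgebra.re_neg, QuaternionAlgebra.imI_neg,
    QuaternionAlgebra.imJ_neg, QuaternionAlgebra.imK_neg]
  ring

lemma nQ_ne_zero (F : Subfield ℝ) (α β : F) (hα : (α : ℝ) < 0) (hβ : (β : ℝ) < 0)
    (q : ℍ[F, α, β]) (hq : q ≠ 0) : nQ q ≠ 0 := by
  intro h
  have h' : ((nQ q : F) : ℝ) = 0 := by rw [h]; exact rfl
  have hR : (q.re : ℝ) ^ 2 - (α : ℝ) * (q.imI : ℝ) ^ 2 - (β : ℝ) * (q.imJ : ℝ) ^ 2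
      + (α : ℝ) * (β : ℝ) * (q.imK : ℝ) ^ 2 = 0 := by
    rw [← h']; push_cast [nQ]; ring
  have t1 : (0:ℝ) ≤ (q.re : ℝ) ^ 2 := sq_nonneg _
  have t2 : (0:ℝ) ≤ -(α : ℝ) * (q.imI : ℝ) ^ 2 :=
    mul_nonneg (neg_pos.mpr hα).le (sq_nonneg _)
  have t3 : (0:ℝ) ≤ -(β : ℝ) * (q.imJ : ℝ) ^ 2 :=
    mul_nonneg (neg_pos.mpr hβ).le (sq_nonneg _)
  have t4 : (0:ℝ) ≤ (α : ℝ) * (β : ℝ) * (q.imK : ℝ) ^ 2 :=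
    mul_nonneg (mul_pos_of_neg_of_neg hα hβ).le (sq_nonneg _)
  have hre : (q.re : ℝ) = 0 := by nlinarith [sq_nonneg (q.re : ℝ)]
  have hi : (q.imI : ℝ) = 0 := by
    have : (q.imI : ℝ) ^ 2 = 0 := by
      have h2 : -(α : ℝ) * (q.imI : ℝ) ^ 2 = 0 := by nlinarith
      have := mul_eq_zero.mp h2
      rcases this with h | h
      · linarith [neg_pos.mpr hα]
      · exact h
    exact pow_eq_zero_iff (by norm_num) |>.mp this
  have hj : (q.imJ : ℝ) = 0 := by
    have : (q.imJ : ℝ) ^ 2 = 0 := by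
      have h2 : -(β : ℝ) * (q.imJ : ℝ) ^ 2 = 0 := by nlinarith
      rcases mul_eq_zero.mp h2 with h | h
      · linarith [neg_pos.mpr hβ]
      · exact h
    exact pow_eq_zero_iff (by norm_num) |>.mp this
  have hk : (q.imK : ℝ) = 0 := by
    have : (q.imK : ℝ) ^ 2 = 0 := by
      have h2 : (α : ℝ) * (β : ℝ) * (q.imK : ℝ) ^ 2 = 0 := by nlinarith
      rcases mul_eq_zero.mp h2 with h | h
      · nlinarith [mul_pos_of_neg_of_neg hα hβ]
      · exact h
    exact pow_eq_zero_iff (by norm_num) |>.mp this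
  apply hq
  ext
  · exact_mod_cast hre
  · exact_mod_cast hi
  · exact_mod_cast hj
  · exact_mod_cast hk

set_option maxHeartbeats 2000000 in
/-- let `F ⊂ ℝ`, `α, β < 0`, `A = diag(a₁,…,aₙ)` non-singular and
`τ_r`-hermitian. If a diagonal `S = diag(s₁,…,sₙ)` satisfies `S² = -λIₙ` and
`ᵗτ_r(S)·A·S = μA` with `λ, μ ∈ F×`, and some `sₖ ∉ F`, then `μ = ±λ`. -/
theorem stmt16 (F : Subfield ℝ) (α β : F) (hα : (α : ℝ) < 0) (hβ : (β : ℝ) < 0)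
    (n : ℕ) (a s : Fin n → ℍ[F, α, β])
    (ha : ∀ l, tauRQ (a l) = a l) (hAu : IsUnit (Matrix.diagonal a))
    (lam mu : F) (hlam : lam ≠ 0) (hmu : mu ≠ 0)
    (hS2 : (Matrix.diagonal s) ^ 2
      = -(lam • (1 : Matrix (Fin n) (Fin n) ℍ[F, α, β])))
    (hSAS : ((Matrix.diagonal s).map tauRQ)ᵀ * Matrix.diagonal a * Matrix.diagonal s
      = mu • Matrix.diagonal a)
    (hk : ∃ k, ¬∃ c : F, s k = c • (1 : ℍ[F, α, β])) :
    mu = lam ∨ mu = -lam := by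
  obtain ⟨k, -⟩ := hk
  -- entrywise equation from hS2
  have h1 : s k * s k = -(lam • (1 : ℍ[F, α, β])) := by
    have := congrFun (congrFun hS2 k) k
    simpa [pow_two, Matrix.diagonal_mul, Matrix.diagonal_apply_eq,
      Matrix.one_apply_eq] using this
  -- rewrite the map/transpose of the diagonal
  have hmap : ((Matrix.diagonal s).map tauRQ)ᵀ
      = Matrix.diagonal (fun i => tauRQ (s i)) := by
    rw [Matrix.diagonal_map (by ext <;> simp [tauRQ]), Matrix.diagonal_transpose]
  have h2 : tauRQ (s k) * a k * s k = mu • a k := by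
    have := congrFun (congrFun hSAS k) k
    rw [hmap, Matrix.diagonal_mul_diagonal, Matrix.diagonal_mul_diagonal] at this
    simpa [Matrix.diagonal_apply_eq] using this
  -- a k ≠ 0
  have hak : a k ≠ 0 := by
    intro h0
    obtain ⟨u, hu⟩ := hAu
    have h1' : u.inv * Matrix.diagonal a = 1 := by
      rw [← hu]; exact u.inv_val
    have := congrFun (congrFun h1' k) k
    rw [Matrix.mul_diagonal, h0, mul_zero] at this
    rw [Matrix.one_apply_eq] at this
    have h11 := congrArg QuaternionAlgebra.re this
    simp at h11
  have hNa : nQ (a k) ≠ 0 := nQ_ne_zero F α β hα hβ (a k) hak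
  -- norms
  have hN1 : nQ (s k) * nQ (s k) = lam ^ 2 := by
    have := congrArg nQ h1
    rw [nQ_mul, nQ_neg, nQ_smul] at this
    simpa [nQ] using this
  have hN2 : nQ (s k) * nQ (a k) * nQ (s k) = mu ^ 2 * nQ (a k) := by
    have := congrArg nQ h2
    rw [nQ_mul, nQ_mul, nQ_tauRQ, nQ_smul] at this
    exact this
  have hsq : mu ^ 2 = lam ^ 2 := by
    have : (nQ (s k) * nQ (s k)) * nQ (a k) = mu ^ 2 * nQ (a k) := by
      rw [← hN2]; ring
    rw [hN1] at this
    exact (mul_right_cancel₀ hNa this).symm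
  have : (mu - lam) * (mu + lam) = 0 := by ring_nf; linear_combination hsq
  rcases mul_eq_zero.mp this with h | h
  · left; linarith [sub_eq_zero.mp h]
  · right; linarith [add_eq_zero_iff_eq_neg.mp h]
end
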